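/- Let U ∈ ℝ^{N×d} have rows u_1ᵀ,…,u_Nᵀ, let V ∈ ℝ^{d×d} be symmetric positive semidefinite with u_iᵀ V u_j ≥ 0 for all i ≠ j, and let z ∈ ℝ^d. Define M = M₁ + M₂ + M₃ with M₁ = Diag(u_iᵀ V u_i), M₂ = −(UVUᵀ − Diag(UVUᵀ)), M₃ = Diag(Σ_{j≠i} u_iᵀ V u_j). Then M is positive semidefinite, and the negative revenue θ ↦ −R(θ) = θᵀ Uᵀ M U θ − θᵀ Uᵀ U z is convex on ℝ^d. -/

import Mathlib

open Matrix BigOperators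

/-- In the AFDLD model with unit elasticities, the attribute-elasticity
matrix `M = M₁ + M₂ + M₃` is positive semidefinite and the negative revenue
`θ ↦ θᵀ Uᵀ M U θ − θᵀ Uᵀ U z` is convex on `ℝ^d`. -/
theorem afdld_negRevenue_convex
    (N d : ℕ) (U : Matrix (Fin N) (Fin d) ℝ)
    (V : Matrix (Fin d) (Fin d) ℝ) (hV : V.PosSemidef)
    (hVcross : ∀ i j, i ≠ j → 0 ≤ U i ⬝ᵥ V.mulVec (U j))
    (z : Fin d → ℝ)
    (M₁ M₂ M₃ : Matrix (Fin N) (Fin N) ℝ)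
    (hM₁ : M₁ = Matrix.diagonal fun i => U i ⬝ᵥ V.mulVec (U i))
    (hM₂ : M₂ = -(U * V * Uᵀ - Matrix.diagonal fun i => (U * V * Uᵀ) i i))
    (hM₃ : M₃ = Matrix.diagonal fun i =>
      ∑ j ∈ Finset.univ.erase i, U i ⬝ᵥ V.mulVec (U j)) :
    (M₁ + M₂ + M₃).PosSemidef ∧
    ConvexOn ℝ Set.univ
      (fun θ : Fin d → ℝ =>
        θ ⬝ᵥ (Uᵀ * (M₁ + M₂ + M₃) * U).mulVec θ - θ ⬝ᵥ (Uᵀ * U).mulVec z) := by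
  set a : Fin N → Fin N → ℝ := fun i j => U i ⬝ᵥ V.mulVec (U j) with ha
  -- entries of U * V * Uᵀ
  have hUVU : ∀ i j, (U * V * Uᵀ) i j = a i j := by
    intro i j
    simp only [ha, Matrix.mul_apply, Matrix.transpose_apply, dotProduct, Matrix.mulVec,
      Finset.sum_mul, Finset.mul_sum]
    rw [Finset.sum_comm]
    exact Finset.sum_congr rfl fun k _ => Finset.sum_congr rfl fun l _ => by ring
  -- symmetry of a
  have hVt : Vᵀ = V := by
    have := hV.1
    simpa [Matrix.IsHermitian, Matrix.conjTranspose_eq_transpose_of_trivial] using this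
  have hvm : ∀ x : Fin d → ℝ, Matrix.vecMul x V = V *ᵥ x := by
    intro x
    conv_lhs => rw [← hVt]
    rw [Matrix.vecMul_transpose]
  have hsymm : ∀ i j, a i j = a j i := by
    intro i j
    simp only [ha]
    rw [Matrix.dotProduct_mulVec, hvm, dotProduct_comm]
  -- nonnegativity of diagonal of a
  have hdiag : ∀ i, 0 ≤ a i i := by
    intro i
    have := hV.dotProduct_mulVec_nonneg (U i)
    simpa [ha] using this
  -- entries of M
  have hM : ∀ i j, (M₁ + M₂ + M₃) i j
      = -(a i j) + if i = j then a i i + ∑ k, a i k else 0 := by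
    intro i j
    by_cases h : i = j
    · subst h
      simp only [Matrix.add_apply, hM₁, hM₂, hM₃, Matrix.neg_apply, Matrix.sub_apply,
        Matrix.diagonal_apply_eq, hUVU, eq_self_iff_true, if_true]
      rw [Finset.sum_erase_eq_sub (Finset.mem_univ i)]
      ring
    · simp only [Matrix.add_apply, hM₁, hM₂, hM₃, Matrix.neg_apply, Matrix.sub_apply,
        Matrix.diagonal_apply_ne _ h, hUVU, if_neg h]
      ring
  -- key quadratic form identity
  have key : ∀ v : Fin N → ℝ, v ⬝ᵥ (M₁ + M₂ + M₃) *ᵥ v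
      = ∑ i, a i i * v i ^ 2 + (1/2) * ∑ i, ∑ j, a i j * (v i - v j) ^ 2 := by
    intro v
    set A := ∑ i, ∑ j, a i j * v i ^ 2 with hA
    set B := ∑ i, ∑ j, a i j * (v i * v j) with hB
    set C := ∑ i, a i i * v i ^ 2 with hC
    have hswap : ∑ i, ∑ j, a i j * v j ^ 2 = A := by
      rw [hA, Finset.sum_comm]
      exact Finset.sum_congr rfl fun i _ => Finset.sum_congr rfl fun j _ => by rw [hsymm]
    have hLHS : v ⬝ᵥ (M₁ + M₂ + M₃) *ᵥ v
        = ∑ i, ∑ j, v i * ((-(a i j) + if i = j then a i i + ∑ k, a i k else 0) * v j) := by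
      simp only [dotProduct, Matrix.mulVec, Finset.mul_sum]
      exact Finset.sum_congr rfl fun i _ => Finset.sum_congr rfl fun j _ => by rw [hM]
    have hsplit : ∀ i, ∑ j, v i * ((-(a i j) + if i = j then a i i + ∑ k, a i k else 0) * v j)
        = (∑ j, -(a i j * (v i * v j))) + v i ^ 2 * (a i i + ∑ k, a i k) := by
      intro i
      rw [show (∑ j, v i * ((-(a i j) + if i = j then a i i + ∑ k, a i k else 0) * v j))
          = ∑ j, (-(a i j * (v i * v j))
              + (if i = j then (a i i + ∑ k, a i k) * (v i * v j) else 0)) from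
        Finset.sum_congr rfl fun j _ => by by_cases h : i = j <;> simp [h] <;> ring]
      rw [Finset.sum_add_distrib, Finset.sum_ite_eq]
      simp only [Finset.mem_univ, if_true]
      ring
    have e1 : ∑ i, v i ^ 2 * ∑ k, a i k = A := by
      rw [hA]
      simp_rw [Finset.mul_sum]
      exact Finset.sum_congr rfl fun i _ => Finset.sum_congr rfl fun k _ => by ring
    have hT1 : ∑ i, ∑ j, -(a i j * (v i * v j)) = -B := by
      rw [hB]
      simp only [Finset.sum_neg_distrib]
    have hT2 : ∑ i, v i ^ 2 * (a i i + ∑ k, a i k) = C + A := by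
      have hstep : ∑ i, v i ^ 2 * (a i i + ∑ k, a i k)
          = (∑ i, a i i * v i ^ 2) + ∑ i, v i ^ 2 * ∑ k, a i k := by
        rw [← Finset.sum_add_distrib]
        exact Finset.sum_congr rfl fun i _ => by ring
      rw [hstep, e1, hC]
    have e2 : ∑ i, ∑ j, a i j * (v i - v j) ^ 2 = A + A - 2 * B := by
      have hterm : ∀ i j : Fin N, a i j * (v i - v j) ^ 2
          = a i j * v i ^ 2 + a i j * v j ^ 2 - 2 * (a i j * (v i * v j)) := by
        intro i j; ring
      simp_rw [hterm]
      simp only [Finset.sum_add_distrib, Finset.sum_sub_distrib]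
      rw [hswap]
      have h2B : ∑ i, ∑ j, 2 * (a i j * (v i * v j)) = 2 * B := by
        rw [hB, Finset.mul_sum]
        exact Finset.sum_congr rfl fun i _ => by rw [Finset.mul_sum]
      rw [h2B]
    rw [hLHS]
    simp_rw [hsplit]
    rw [Finset.sum_add_distrib, hT1, hT2, e2]
    ring
  -- positive semidefiniteness of M
  have hHerm : (M₁ + M₂ + M₃).IsHermitian := by
    rw [Matrix.IsHermitian]
    ext i j
    simp only [Matrix.conjTranspose_apply, star_trivial]
    rw [hM, hM]
    by_cases h : i = j
    · subst h; rfl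
    · rw [if_neg h, if_neg (Ne.symm h), hsymm]
  have hPSD : (M₁ + M₂ + M₃).PosSemidef := by
    refine Matrix.PosSemidef.of_dotProduct_mulVec_nonneg hHerm fun v => ?_
    have hv : star v = v := by simp
    rw [hv, key]
    have h1 : 0 ≤ ∑ i, a i i * v i ^ 2 :=
      Finset.sum_nonneg fun i _ => mul_nonneg (hdiag i) (sq_nonneg _)
    have h2 : 0 ≤ ∑ i, ∑ j, a i j * (v i - v j) ^ 2 := by
      refine Finset.sum_nonneg fun i _ => Finset.sum_nonneg fun j _ => ?_
      by_cases h : i = j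
      · subst h; simp
      · exact mul_nonneg (hVcross i j h) (sq_nonneg _)
    positivity
  refine ⟨hPSD, ?_⟩
  -- Q = Uᵀ M U is PSD
  have hQ : (Uᵀ * (M₁ + M₂ + M₃) * U).PosSemidef := by
    have := hPSD.conjTranspose_mul_mul_same U
    simpa using this
  set Q := Uᵀ * (M₁ + M₂ + M₃) * U with hQdef
  have hq : ∀ w : Fin d → ℝ, 0 ≤ w ⬝ᵥ Q *ᵥ w := by
    intro w
    have := hQ.dotProduct_mulVec_nonneg w
    simpa using this
  have hQt : Qᵀ = Q := by
    have := hQ.1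
    simpa [Matrix.IsHermitian, Matrix.conjTranspose_eq_transpose_of_trivial] using this
  have hvmQ : ∀ x : Fin d → ℝ, Matrix.vecMul x Q = Q *ᵥ x := by
    intro x
    conv_lhs => rw [← hQt]
    rw [Matrix.vecMul_transpose]
  have hqsym : ∀ u w : Fin d → ℝ, u ⬝ᵥ Q *ᵥ w = w ⬝ᵥ Q *ᵥ u := by
    intro u w
    rw [Matrix.dotProduct_mulVec, hvmQ, dotProduct_comm]
  refine ⟨convex_univ, fun x _ y _ s t hs ht hst => ?_⟩
  simp only [smul_eq_mul]
  have hbil : (s • x + t • y) ⬝ᵥ Q *ᵥ (s • x + t • y)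
      = s * s * (x ⬝ᵥ Q *ᵥ x) + s * t * (x ⬝ᵥ Q *ᵥ y) + s * t * (y ⬝ᵥ Q *ᵥ x)
        + t * t * (y ⬝ᵥ Q *ᵥ y) := by
    simp only [Matrix.mulVec_add, Matrix.mulVec_smul, dotProduct_add, add_dotProduct,
      smul_dotProduct, dotProduct_smul, smul_eq_mul]
    ring
  have hlin : (s • x + t • y) ⬝ᵥ (Uᵀ * U) *ᵥ z
      = s * (x ⬝ᵥ (Uᵀ * U) *ᵥ z) + t * (y ⬝ᵥ (Uᵀ * U) *ᵥ z) := by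
    simp only [add_dotProduct, smul_dotProduct, smul_eq_mul]
  have hsq : 0 ≤ (x - y) ⬝ᵥ Q *ᵥ (x - y) := hq (x - y)
  have hexp2 : (x - y) ⬝ᵥ Q *ᵥ (x - y)
      = x ⬝ᵥ Q *ᵥ x - x ⬝ᵥ Q *ᵥ y - y ⬝ᵥ Q *ᵥ x + y ⬝ᵥ Q *ᵥ y := by
    simp only [Matrix.mulVec_sub, dotProduct_sub, sub_dotProduct]
    ring
  rw [hexp2] at hsq
  have ht' : t = 1 - s := by linarith
  subst ht'
  simp only [hbil, hlin]
  nlinarith [mul_nonneg (mul_nonneg hs ht) hsq]
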